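/- For every m ≥ 2, every occurrence of the word δ_{m−1} E_{1,m−1} δ_{m−1} (of length 2^{m−1} + 1) in the period-doubling sequence D is immediately preceded and immediately followed by E_{1,m−1}: if δ_{m−1} E_{1,m−1} δ_{m−1} occurs in D at position i, then i > 2^{m−1} − 1, D[i − (2^{m−1} − 1) .. i − 1] = E_{1,m−1}, and D[i + 2^{m−1} + 1 .. i + 2^m − 1] = E_{1,m−1}. -/

import Mathlib

/-- The alphabet: letters a, b (for the period-doubling sequence) and c (used by Θ₂). -/
inductive Letter : Type
  | a | b | c
deriving DecidableEq, Repr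

open Letter

/-- The period-doubling substitution σ : a ↦ ab, b ↦ aa, extended to words
(the extra letter c is left untouched; it is never produced). -/
def sigmaw : List Letter → List Letter :=
  fun w => w.flatMap fun x => match x with
    | .a => [.a, .b]
    | .b => [.a, .a]
    | .c => [.c]

/-- A_m = σ^m(a). -/
def A (m : ℕ) : List Letter := sigmaw^[m] [.a]

/-- B_m = σ^m(b). -/
def B (m : ℕ) : List Letter := sigmaw^[m] [.b]

/-- δ_m, the last letter of A_m. -/
def delta (m : ℕ) : Letter := (A m).getLastD .a

/-- The period-doubling sequence D, as a function giving its (n+1)-st letter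
(0-indexed); it is the fixed point of σ beginning with a, and A_{n+1} is a
prefix of it of length 2^{n+1} > n. -/
def D (n : ℕ) : Letter := (A (n + 1)).getD n .a

/-- The finite segment D[i .. i+len−1] of the period-doubling sequence,
with 1-based starting position i. -/
def Dseg (i len : ℕ) : List Letter := (List.range len).map fun k => D (i - 1 + k)

/-- u occurs in the finite word w at (1-based) position i. -/
def OccursAt {α : Type*} (u w : List α) (i : ℕ) : Prop :=
  1 ≤ i ∧ i - 1 + u.length ≤ w.length ∧ (w.drop (i - 1)).take u.length = u

/-- u is a factor of the finite word w. -/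
def IsFactor {α : Type*} (u w : List α) : Prop := ∃ i, OccursAt u w i

/-- u occurs in the period-doubling sequence D at (1-based) position i. -/
def DOccursAt (u : List Letter) (i : ℕ) : Prop := 1 ≤ i ∧ Dseg i u.length = u

/-- u is a factor of the period-doubling sequence D. -/
def FactorD (u : List Letter) : Prop := ∃ i, DOccursAt u i

/-- L(u,p): the starting position of the p-th occurrence (p ≥ 1) of u in D. -/
noncomputable def L (u : List Letter) (p : ℕ) : ℕ := Nat.nth (DOccursAt u) (p - 1)

/-- r_p(u): the p-th return word of u (p ≥ 1), i.e. D[L(u,p) .. L(u,p+1)−1];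
r_0(u) is the prefix of D preceding the first occurrence of u. -/
noncomputable def r (u : List Letter) (p : ℕ) : List Letter :=
  if p = 0 then Dseg 1 (L u 1 - 1) else Dseg (L u p) (L u (p + 1) - L u p)

/-- The morphism τ₁ : a ↦ a, b ↦ bb, extended to words. -/
def tau1 : List Letter → List Letter :=
  fun w => w.flatMap fun x => match x with
    | .a => [.a]
    | .b => [.b, .b]
    | .c => [.c]

/-- The morphism τ₂ : a ↦ ab, b ↦ acac, extended to words. -/
def tau2 : List Letter → List Letter :=
  fun w => w.flatMap fun x => match x with
    | .a => [.a, .b]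
    | .b => [.a, .c, .a, .c]
    | .c => [.c]

/-- Θ₁[p], the p-th letter (p ≥ 1) of Θ₁ = τ₁(D): since |τ₁(w)| ≥ |w|, the p-th
letter of Θ₁ is the p-th letter of the image of the length-p prefix of D. -/
def Theta1 (p : ℕ) : Letter := (tau1 (Dseg 1 p)).getD (p - 1) .a

/-- Θ₂[p], the p-th letter (p ≥ 1) of Θ₂ = τ₂(D). -/
def Theta2 (p : ℕ) : Letter := (tau2 (Dseg 1 p)).getD (p - 1) .a

/-- The envelope word E_{1,m} = A_m with its last letter δ_m deleted. -/
def E1 (m : ℕ) : List Letter := (A m).dropLast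

/-- The envelope word E_{2,m} = B_m B_{m−1} with its last letter δ_m deleted. -/
def E2 (m : ℕ) : List Letter := (B m ++ B (m - 1)).dropLast

/-- Enumeration of the envelope words in the order
E_{1,1} ⊏ E_{2,1} ⊏ E_{1,2} ⊏ E_{2,2} ⊏ …. -/
def Eword (k : ℕ) : List Letter := if k % 2 = 0 then E1 (k / 2 + 1) else E2 (k / 2 + 1)

/-- Env(u): the ⊏-least envelope word having u as a factor. -/
noncomputable def Env (u : List Letter) : List Letter :=
  Eword (sInf {k | IsFactor u (Eword k)})

/-- The letterwise complement exchanging a and b. -/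
def comp : Letter → Letter
  | .a => .b
  | .b => .a
  | .c => .c

section Aux

open Letter

/-! ### 2-adic valuation helpers -/

private def val (n : ℕ) : ℕ := n.factorization 2

private lemma val_pow_mul (v u : ℕ) (hu : ¬ 2 ∣ u) : val (2^v * u) = v := by
  have hu0 : u ≠ 0 := by rintro rfl; exact hu ⟨0, rfl⟩
  unfold val
  rw [Nat.factorization_mul (pow_ne_zero _ two_ne_zero) hu0]
  simp [Nat.Prime.factorization_pow, Nat.Prime.factorization (p := 2) Nat.prime_two,
    Nat.factorization_eq_zero_of_not_dvd hu]

private lemma val_pow_mul' (v u : ℕ) (hu : u ≠ 0) : val (2^v * u) = v + val u := by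
  unfold val
  rw [Nat.factorization_mul (pow_ne_zero _ two_ne_zero) hu]
  simp [Nat.Prime.factorization_pow, Nat.Prime.factorization (p := 2) Nat.prime_two]

private lemma val_lt {t e : ℕ} (ht : t ≠ 0) (h : t < 2^e) : val t < e := by
  by_contra hc
  push_neg at hc
  have : (2:ℕ)^e ∣ t := (Nat.Prime.pow_dvd_iff_le_factorization Nat.prime_two ht).2 hc
  exact absurd (Nat.le_of_dvd (Nat.pos_of_ne_zero ht) this) (by omega)

private lemma val_decomp (t : ℕ) (ht : t ≠ 0) : ∃ u, ¬ 2 ∣ u ∧ t = 2 ^ val t * u := by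
  refine ⟨t / 2 ^ val t, Nat.not_dvd_ordCompl Nat.prime_two ht, ?_⟩
  exact (Nat.ordProj_mul_ordCompl_eq_self t 2).symm

private lemma val_add {e t : ℕ} (s : ℕ) (ht : t ≠ 0) (hv : val t < e) :
    val (2^e * s + t) = val t := by
  obtain ⟨u, hu, hdec⟩ := val_decomp t ht
  have h2 : 2^e * s + t = 2^(val t) * (2^(e - val t) * s + u) := by
    rw [Nat.mul_add, ← Nat.mul_assoc, ← pow_add, Nat.add_sub_cancel' (le_of_lt hv), ← hdec]
  rw [h2, val_pow_mul]
  intro hdvd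
  have h1 : 2 ∣ 2^(e - val t) * s := Dvd.dvd.mul_right (dvd_pow_self 2 (by omega)) s
  exact hu ((Nat.dvd_add_right h1).mp hdvd)

/-! ### structure of A and B -/

private lemma sigmaw_append (u v : List Letter) : sigmaw (u ++ v) = sigmaw u ++ sigmaw v :=
  List.flatMap_append ..

private lemma sigmaw_iter_append (m : ℕ) (u v : List Letter) :
    sigmaw^[m] (u ++ v) = sigmaw^[m] u ++ sigmaw^[m] v := by
  induction m generalizing u v with
  | zero => rfl
  | succ m ih =>
    rw [Function.iterate_succ_apply, Function.iterate_succ_apply, Function.iterate_succ_apply,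
      sigmaw_append, ih]

private lemma A_succ (m : ℕ) : A (m+1) = sigmaw (A m) :=
  Function.iterate_succ_apply' _ _ _

private lemma A_succ' (m : ℕ) : A (m+1) = A m ++ B m := by
  have : A (m+1) = sigmaw^[m] ([.a] ++ [.b]) := by
    rw [A, Function.iterate_succ_apply]; rfl
  rw [this, sigmaw_iter_append]; rfl

private lemma A_noc (m : ℕ) : ∀ x ∈ A m, x ≠ .c := by
  induction m with
  | zero => intro x hx; simp [A] at hx; subst hx; simp
  | succ m ih =>
    intro x hx
    rw [A_succ, sigmaw, List.mem_flatMap] at hx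
    obtain ⟨y, hy, hxy⟩ := hx
    have := ih y hy
    match y, this with
    | .a, _ => simp at hxy; rcases hxy with rfl | rfl <;> simp
    | .b, _ => simp at hxy; rcases hxy with rfl | rfl <;> simp

private lemma sigmaw_length (w : List Letter) (h : ∀ x ∈ w, x ≠ .c) :
    (sigmaw w).length = 2 * w.length := by
  induction w with
  | nil => rfl
  | cons x t ih =>
    have hx := h x (List.mem_cons_self)
    have ht := ih (fun y hy => h y (List.mem_cons_of_mem _ hy))
    match x, hx with
    | .a, _ => show ([Letter.a, .b] ++ sigmaw t).length = _; simp [ht]; ring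
    | .b, _ => show ([Letter.a, .a] ++ sigmaw t).length = _; simp [ht]; ring

private lemma A_length (m : ℕ) : (A m).length = 2 ^ m := by
  induction m with
  | zero => rfl
  | succ m ih =>
    rw [A_succ, sigmaw_length _ (A_noc m), ih, pow_succ, Nat.mul_comm]

private lemma sigmaw_getD_even (w : List Letter) (h : ∀ x ∈ w, x ≠ .c) (k : ℕ)
    (hk : k < w.length) : (sigmaw w).getD (2*k) .a = .a := by
  induction w generalizing k with
  | nil => simp at hk
  | cons x t ih =>
    have hx := h x (List.mem_cons_self)
    have ht := fun y hy => h y (List.mem_cons_of_mem _ hy)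
    match k with
    | 0 =>
      match x, hx with
      | .a, _ => rfl
      | .b, _ => rfl
    | k + 1 =>
      have hk' : k < t.length := by simp at hk; omega
      have harith : 2 * (k+1) = (2*k) + 1 + 1 := by ring
      match x, hx with
      | .a, _ =>
        show ([Letter.a, .b] ++ sigmaw t).getD (2*(k+1)) .a = _
        rw [harith]
        simpa using ih ht k hk'
      | .b, _ =>
        show ([Letter.a, .a] ++ sigmaw t).getD (2*(k+1)) .a = _
        rw [harith]
        simpa using ih ht k hk'

private lemma sigmaw_getD_odd (w : List Letter) (h : ∀ x ∈ w, x ≠ .c) (k : ℕ)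
    (hk : k < w.length) : (sigmaw w).getD (2*k+1) .a = comp (w.getD k .a) := by
  induction w generalizing k with
  | nil => simp at hk
  | cons x t ih =>
    have hx := h x (List.mem_cons_self)
    have ht := fun y hy => h y (List.mem_cons_of_mem _ hy)
    match k with
    | 0 =>
      match x, hx with
      | .a, _ => rfl
      | .b, _ => rfl
    | k + 1 =>
      have hk' : k < t.length := by simp at hk; omega
      have harith : 2 * (k+1) + 1 = ((2*k+1)) + 1 + 1 := by ring
      match x, hx with
      | .a, _ =>
        show ([Letter.a, .b] ++ sigmaw t).getD (2*(k+1)+1) .a = _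
        rw [harith]
        simpa using ih ht k hk'
      | .b, _ =>
        show ([Letter.a, .a] ++ sigmaw t).getD (2*(k+1)+1) .a = _
        rw [harith]
        simpa using ih ht k hk'

private lemma A_prefix {m m' : ℕ} (h : m ≤ m') : (A m).IsPrefix (A m') := by
  induction m' with
  | zero => rw [Nat.le_zero] at h; subst h; exact List.prefix_refl _
  | succ k ih =>
    rcases Nat.lt_or_ge m (k+1) with h1 | h1
    · exact (ih (by omega)).trans ⟨B k, (A_succ' k).symm⟩
    · have : m = k + 1 := by omega
      subst this; exact List.prefix_refl _

private lemma getD_A_eq {m m' n : ℕ} (h : n < 2^m) (h' : n < 2^m') :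
    (A m).getD n .a = (A m').getD n .a := by
  rcases le_total m m' with hle | hle
  · obtain ⟨t, ht⟩ := A_prefix hle
    rw [← ht, List.getD_append _ _ _ _ (by rw [A_length]; exact h)]
  · obtain ⟨t, ht⟩ := A_prefix hle
    rw [← ht, List.getD_append _ _ _ _ (by rw [A_length]; exact h')]

private lemma getD_A_D {m n : ℕ} (h : n < 2^m) : (A m).getD n .a = D n :=
  getD_A_eq h (lt_of_lt_of_le ((Nat.lt_two_pow_self (n := n))) (Nat.pow_le_pow_right (by norm_num) (by omega)))

private lemma D_even (k : ℕ) : D (2*k) = .a := by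
  have h1 : 2*k < 2^(k+2) := by
    have := (Nat.lt_two_pow_self (n := k))
    have h2 : 2^(k+2) = 4 * 2^k := by ring
    omega
  rw [← getD_A_D h1, A_succ]
  exact sigmaw_getD_even _ (A_noc _) k (by rw [A_length]; exact lt_of_lt_of_le ((Nat.lt_two_pow_self (n := k))) (Nat.pow_le_pow_right (by norm_num) (by omega)))

private lemma D_odd (k : ℕ) : D (2*k+1) = comp (D k) := by
  have h1 : 2*k+1 < 2^(k+2) := by
    have := (Nat.lt_two_pow_self (n := k))
    have h2 : 2^(k+2) = 4 * 2^k := by ring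
    omega
  have hk : k < (A (k+1)).length := by rw [A_length]; exact (Nat.lt_two_pow_self (n := k)) |>.trans_le (Nat.pow_le_pow_right (by norm_num) (by omega))
  rw [← getD_A_D h1, A_succ]
  rw [sigmaw_getD_odd _ (A_noc _) k hk, getD_A_D (by rw [A_length] at hk; exact hk)]

private lemma D_char (n : ℕ) : D n = (if val (n+1) % 2 = 0 then Letter.a else Letter.b) := by
  induction n using Nat.strong_induction_on with
  | _ n ih =>
    rcases Nat.even_or_odd n with ⟨k, hk⟩ | ⟨k, hk⟩
    · have hn : n = 2 * k := by omega
      subst hn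
      rw [D_even]
      have : val (2*k+1) = 0 := Nat.factorization_eq_zero_of_not_dvd (by omega)
      rw [this]; simp
    · have hn : n = 2 * k + 1 := by omega
      subst hn
      rw [D_odd, ih k (by omega)]
      have hv : val (2*k+1+1) = 1 + val (k+1) := by
        have : 2*k+1+1 = 2^1 * (k+1) := by ring
        rw [this, val_pow_mul' 1 (k+1) (by omega)]
      rw [hv]
      rcases Nat.mod_two_eq_zero_or_one (val (k+1)) with h | h
      · have h2 : (1 + val (k+1)) % 2 = 1 := by omega
        simp [h, h2, comp]
      · have h2 : (1 + val (k+1)) % 2 = 0 := by omega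
        simp [h, h2, comp]

private lemma D_val_eq {x y : ℕ} (h : val (x+1) = val (y+1)) : D x = D y := by
  rw [D_char, D_char, h]

private lemma D_parity {x y : ℕ} (h : D x = D y) : val (x+1) % 2 = val (y+1) % 2 := by
  rw [D_char, D_char] at h
  split_ifs at h with h1 h2 h2 <;> first | omega | simp_all

/-! ### segments and envelope words -/

private lemma Dseg_getD {i len k : ℕ} (hk : k < len) (x : Letter) :
    (Dseg i len).getD k x = D (i - 1 + k) := by
  rw [List.getD_eq_getElem _ _ (by simpa [Dseg] using hk)]
  simp [Dseg]

private lemma Dseg_eq (i' : ℕ) (l : List Letter)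
    (h : ∀ k, k < l.length → D (i' - 1 + k) = l.getD k .a) : Dseg i' l.length = l := by
  apply List.ext_getElem (by simp [Dseg])
  intro k h1 h2
  have hk : k < l.length := h2
  rw [← List.getD_eq_getElem _ .a h2, ← h k hk, ← Dseg_getD hk .a,
    List.getD_eq_getElem _ _ h1]

private lemma E1_length (m : ℕ) : (E1 m).length = 2^m - 1 := by
  simp [E1, A_length]

private lemma E1_getD {m k : ℕ} (hk : k < 2^m - 1) : (E1 m).getD k .a = D k := by
  have hk' : k < (E1 m).length := by rw [E1_length]; exact hk
  have hk2 : k < (A m).length := by rw [A_length]; omega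
  have step : (E1 m).getD k .a = (A m).getD k .a := by
    rw [List.getD_eq_getElem _ _ hk', List.getD_eq_getElem _ _ hk2]
    exact List.getElem_dropLast _
  rw [step]
  exact getD_A_D (by rw [A_length] at hk2; exact hk2)

private lemma getLastD_eq_getD (l : List Letter) :
    ∀ d, l ≠ [] → l.getLastD d = l.getD (l.length - 1) d := by
  induction l with
  | nil => intro d h; simp at h
  | cons x t ih =>
    intro d _
    cases t with
    | nil => rfl
    | cons y s =>
      rw [List.getLastD_cons, ih x (by simp)]
      have h1 : (y::s).length - 1 < (y::s).length := by simp
      have h2 : (x::y::s).length - 1 = ((y::s).length - 1) + 1 := by simp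
      rw [h2, List.getD_cons_succ, List.getD_eq_getElem _ _ h1, List.getD_eq_getElem _ _ h1]

private lemma delta_char (m : ℕ) : delta m = (if m % 2 = 0 then Letter.a else Letter.b) := by
  have hpos : 0 < 2^m := pow_pos (by norm_num) m
  have hne : A m ≠ [] := by
    intro h
    have hlength := A_length m
    rw [h] at hlength
    simp at hlength
    omega
  rw [delta, getLastD_eq_getD _ _ hne, A_length]
  have h1 : 2^m - 1 < 2^m := by omega
  rw [getD_A_D h1, D_char]
  have h3 : 2^m - 1 + 1 = 2^m * 1 := by omega
  rw [h3, val_pow_mul m 1 (by omega)]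

end Aux


private lemma iteab_parity {p q : ℕ}
    (h : (if p % 2 = 0 then Letter.a else Letter.b) = (if q % 2 = 0 then Letter.a else Letter.b)) :
    p % 2 = q % 2 := by
  split_ifs at h <;> first | omega | simp_all

/-- For every m ≥ 2, every occurrence of δ_{m−1} E_{1,m−1} δ_{m−1} in D
at position i is immediately preceded and followed by E_{1,m−1}: i > 2^{m−1} − 1,
D[i − (2^{m−1} − 1) .. i − 1] = E_{1,m−1}, and D[i + 2^{m−1} + 1 .. i + 2^m − 1]
= E_{1,m−1}. -/
theorem middle_word_surrounded (m : ℕ) (hm : 2 ≤ m) (i : ℕ)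
    (hocc : DOccursAt (delta (m - 1) :: (E1 (m - 1) ++ [delta (m - 1)])) i) :
    2 ^ (m - 1) - 1 < i ∧
    Dseg (i - (2 ^ (m - 1) - 1)) (2 ^ (m - 1) - 1) = E1 (m - 1) ∧
    Dseg (i + 2 ^ (m - 1) + 1) (2 ^ (m - 1) - 1) = E1 (m - 1) := by
  set e := m - 1 with hedef
  have he : 1 ≤ e := by omega
  have h2e : 1 ≤ 2^e := Nat.one_le_two_pow
  obtain ⟨hi, hseg⟩ := hocc
  have hlen : (delta e :: (E1 e ++ [delta e])).length = 2^e + 1 := by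
    simp [E1_length]; omega
  have hpt : ∀ k, k < 2^e + 1 →
      D (i - 1 + k) = (delta e :: (E1 e ++ [delta e])).getD k .a := by
    intro k hk
    rw [← hseg, Dseg_getD (by rw [hlen]; exact hk)]
  -- parity hypotheses
  have Hl : val i % 2 = e % 2 := by
    have h0 := hpt 0 (by omega)
    rw [show (delta e :: (E1 e ++ [delta e])).getD 0 .a = delta e from rfl,
      D_char, delta_char] at h0
    have := iteab_parity h0
    rwa [show i - 1 + 0 + 1 = i from by omega] at this
  have Hm : ∀ t, 1 ≤ t → t ≤ 2^e - 1 → val (i + t) % 2 = val t % 2 := by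
    intro t h1 h2
    obtain ⟨s, rfl⟩ : ∃ s, t = s + 1 := ⟨t - 1, by omega⟩
    have hk := hpt (s+1) (by omega)
    rw [List.getD_cons_succ, List.getD_append _ _ _ _ (by rw [E1_length]; omega),
      E1_getD (by omega)] at hk
    have := D_parity hk
    rwa [show i - 1 + (s+1) + 1 = i + (s+1) from by omega] at this
  -- key divisibility
  have hdvd : 2^e ∣ i := by
    by_contra hnd
    have hw : val i < e := by
      by_contra hc
      push_neg at hc
      exact hnd (dvd_trans (pow_dvd_pow 2 hc) (Nat.ordProj_dvd i 2))
    rcases Nat.lt_or_ge (val i) (e - 1) with hw2 | hw2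
    · -- val i ≤ e - 2
      set w := val i with hwdef
      obtain ⟨u, hu, hdec⟩ := val_decomp i (by omega)
      have hu0 : u ≠ 0 := by rintro rfl; omega
      have hpw : (2:ℕ)^w < 2^e := Nat.pow_lt_pow_right one_lt_two (by omega)
      have h1 := Hm (2^w) Nat.one_le_two_pow (by omega)
      have e1 : i + 2^w = 2^w * (u+1) := by rw [hdec]; ring
      have e2 : val (i + 2^w) = w + val (u+1) := by
        rw [e1, val_pow_mul' _ _ (by omega)]
      have e3 : val (2^w) = w := by simpa using val_pow_mul w 1 (by omega)
      rw [e2, e3] at h1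
      have hdvd2 : 2 ∣ u + 1 := by omega
      have hpos : 0 < val (u+1) :=
        Nat.Prime.factorization_pos_of_dvd Nat.prime_two (by omega) hdvd2
      have h4 : (2:ℕ)^2 ∣ u + 1 :=
        dvd_trans (pow_dvd_pow 2 (show 2 ≤ val (u+1) by omega)) (Nat.ordProj_dvd (u+1) 2)
      obtain ⟨c, hc⟩ := h4
      have hc' : u + 1 = 4 * c := by norm_num at hc; omega
      have hpw2 : 2^w * 3 ≤ 2^e - 1 := by
        have h42 : (2:ℕ)^(w+2) ≤ 2^e := Nat.pow_le_pow_right (by norm_num) (by omega)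
        have h43 : (2:ℕ)^(w+2) = 2^w * 4 := by ring
        have h2w : 0 < (2:ℕ)^w := by positivity
        omega
      have h2 := Hm (2^w * 3) (by have := Nat.one_le_two_pow (n := w); omega) hpw2
      have e4 : val (2^w * 3) = w := val_pow_mul w 3 (by omega)
      have e5 : i + 2^w*3 = 2^w * (u+3) := by rw [hdec]; ring
      have e6 : val (u+3) = 1 := by
        have h53 : u + 3 = 2^1 * (2*c + 1) := by omega
        rw [h53]
        exact val_pow_mul 1 _ (by omega)
      have e7 : val (i + 2^w*3) = w + 1 := by
        rw [e5, val_pow_mul' _ _ (by omega), e6]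
      rw [e4, e7] at h2
      omega
    · -- val i = e - 1 : contradicts Hl
      omega
  have hge : 2^e ≤ i := Nat.le_of_dvd (by omega) hdvd
  obtain ⟨s, hs'⟩ := hdvd
  obtain ⟨s', rfl⟩ : ∃ s'', s = s'' + 1 := by
    refine ⟨s - 1, ?_⟩
    rcases Nat.eq_zero_or_pos s with rfl | hx
    · simp at hs'; omega
    · omega
  have hieq : i = 2^e * s' + 2^e := by rw [hs']; ring
  refine ⟨by omega, ?_, ?_⟩
  · have hres : Dseg (i - (2 ^ e - 1)) (E1 e).length = E1 e := by
      apply Dseg_eq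
      intro k hk
      rw [E1_length] at hk
      rw [E1_getD hk]
      apply D_val_eq
      have hp1 : i - (2^e - 1) - 1 + k + 1 = 2^e * s' + (k+1) := by
        set P := 2^e * s' with hP
        omega
      rw [hp1]
      exact val_add s' (by omega) (val_lt (by omega) (by omega))
    rwa [E1_length] at hres
  · have hres : Dseg (i + 2 ^ e + 1) (E1 e).length = E1 e := by
      apply Dseg_eq
      intro k hk
      rw [E1_length] at hk
      rw [E1_getD hk]
      apply D_val_eq
      have hp1 : i + 2^e + 1 - 1 + k + 1 = 2^e * (s'+2) + (k+1) := by
        have hx : 2^e * (s' + 2) = 2^e * s' + 2^e + 2^e := by ring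
        set P := 2^e * s' with hP
        omega
      rw [hp1]
      exact val_add (s'+2) (by omega) (val_lt (by omega) (by omega))
    rwa [E1_length] at hres
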